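/- For x ∈ (0,1/2), 2 + 4x + (7 - 6x)·log(1-x) > 0. -/

import Mathlib

theorem stmt17 (x : ℝ) (hx : x ∈ Set.Ioo (0:ℝ) (1/2)) :
    0 < 2 + 4*x + (7 - 6*x) * Real.log (1 - x) := by
  obtain ⟨h0, h1⟩ := hx
  have hx1 : (0:ℝ) < 1 - x := by linarith
  have hlog : -(x / (1 - x)) ≤ Real.log (1 - x) := by
    have h := Real.log_le_sub_one_of_pos (x := (1-x)⁻¹) (by positivity)
    rw [Real.log_inv] at h
    have h2 : (1-x)⁻¹ - 1 = x/(1-x) := by field_simp; ring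
    linarith [h2 ▸ h]
  have hc : (0:ℝ) ≤ 7 - 6*x := by linarith
  have key := mul_le_mul_of_nonneg_left hlog hc
  have hdiv : (7 - 6*x) * (x / (1 - x)) < 2 + 4*x := by
    rw [show (7 - 6*x) * (x / (1 - x)) = ((7 - 6*x)*x)/(1-x) by ring, div_lt_iff₀ hx1]
    nlinarith
  nlinarith [key, hdiv]
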